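/- Let s > 0, let p ≥ 1 be a natural number, and let Q : ℝ → ℝ be integrable and square-integrable with ∫_ℝ (2π|ξ|)^s |Q̂(ξ)| dξ < ∞ and with Q^{p+2} integrable, satisfying pointwise the equation (|∂ₓ|^s Q)(x) + Q(x) − Q(x)^{p+1} = 0. For c > 1 define U_c(x) := (c−1)^{1/p} Q( ((c−1)/c)^{1/s} x ), and suppose U_c², U_c^{p+2}, and (|∂ₓ|^s U_c)·U_c are integrable. Then ∫_ℝ ( U_c(x) + (|∂ₓ|^s U_c)(x) ) U_c(x) dx = (c−1)^{2/p − 1/s} c^{1/s − 1} ∫_ℝ Q² dx + (c−1)^{1 + 2/p − 1/s} c^{1/s − 1} ∫_ℝ Q^{p+2} dx. -/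

import Mathlib

open MeasureTheory Real

/-- The Fourier transform `f̂(ξ) = ∫ f(x) e^{−2πixξ} dx`. -/
noncomputable def fourierT (f : ℝ → ℂ) (ξ : ℝ) : ℂ :=
  ∫ x : ℝ, f x * Complex.exp (-(2 * (π : ℂ) * Complex.I * (x : ℂ) * (ξ : ℂ)))

/-- The fractional derivative `(|∂ₓ|^s f)(x) = ∫ (2π|ξ|)^s f̂(ξ) e^{2πixξ} dξ`. -/
noncomputable def fracDeriv (s : ℝ) (f : ℝ → ℂ) (x : ℝ) : ℂ :=
  ∫ ξ : ℝ, (((2 * π * |ξ|) ^ s : ℝ) : ℂ) * fourierT f ξ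
      * Complex.exp (2 * (π : ℂ) * Complex.I * (x : ℂ) * (ξ : ℂ))

/-- Fourier transform of a constant multiple. -/
lemma fourierT_const_mul (a : ℂ) (f : ℝ → ℂ) (ξ : ℝ) :
    fourierT (fun x => a * f x) ξ = a * fourierT f ξ := by
  unfold fourierT
  rw [← integral_const_mul]
  congr 1; ext x; ring

/-- Fractional derivative of a constant multiple. -/
lemma fracDeriv_const_mul (s : ℝ) (a : ℂ) (f : ℝ → ℂ) (x : ℝ) :
    fracDeriv s (fun y => a * f y) x = a * fracDeriv s f x := by
  unfold fracDeriv
  rw [← integral_const_mul]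
  congr 1; ext ξ
  rw [fourierT_const_mul]; ring

/-- Fourier transform of a dilation. -/
lemma fourierT_comp_mul_left (f : ℝ → ℂ) {B : ℝ} (hB : 0 < B) (ξ : ℝ) :
    fourierT (fun x => f (B * x)) ξ = (B⁻¹ : ℝ) * fourierT f (ξ / B) := by
  have hBne : (B : ℂ) ≠ 0 := Complex.ofReal_ne_zero.mpr hB.ne'
  unfold fourierT
  have key : (∫ x : ℝ, (fun y : ℝ =>
        f y * Complex.exp (-(2 * (π : ℂ) * Complex.I * (y : ℂ) * (((ξ / B : ℝ)) : ℂ)))) (B * x))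
      = |B⁻¹| • ∫ y : ℝ, f y * Complex.exp (-(2 * (π : ℂ) * Complex.I * (y : ℂ) * (((ξ / B : ℝ)) : ℂ))) :=
    MeasureTheory.Measure.integral_comp_mul_left
      (fun y : ℝ => f y * Complex.exp (-(2 * (π : ℂ) * Complex.I * (y : ℂ) * (((ξ / B : ℝ)) : ℂ)))) B
  have h1 : ∀ x : ℝ, f (B * x) * Complex.exp (-(2 * (π : ℂ) * Complex.I * ((B * x : ℝ) : ℂ) * (((ξ / B : ℝ)) : ℂ)))
      = f (B * x) * Complex.exp (-(2 * (π : ℂ) * Complex.I * (x : ℂ) * (ξ : ℂ))) := by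
    intro x
    congr 2
    push_cast
    field_simp
  simp only at key
  calc (∫ x : ℝ, f (B * x) * Complex.exp (-(2 * (π : ℂ) * Complex.I * (x : ℂ) * (ξ : ℂ))))
      = ∫ x : ℝ, f (B * x) * Complex.exp (-(2 * (π : ℂ) * Complex.I * ((B * x : ℝ) : ℂ) * (((ξ / B : ℝ)) : ℂ))) := by
        refine integral_congr_ae (Filter.Eventually.of_forall fun x => ?_)
        exact (h1 x).symm
    _ = |B⁻¹| • ∫ y : ℝ, f y * Complex.exp (-(2 * (π : ℂ) * Complex.I * (y : ℂ) * (((ξ / B : ℝ)) : ℂ))) := key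
    _ = (B⁻¹ : ℝ) * ∫ y : ℝ, f y * Complex.exp (-(2 * (π : ℂ) * Complex.I * (y : ℂ) * (((ξ / B : ℝ)) : ℂ))) := by
        rw [abs_of_pos (inv_pos.mpr hB), Complex.real_smul]

/-- Fractional derivative of a dilation. -/
lemma fracDeriv_comp_mul_left (s : ℝ) (f : ℝ → ℂ) {B : ℝ} (hB : 0 < B) (x : ℝ) :
    fracDeriv s (fun y => f (B * y)) x = ((B ^ s : ℝ) : ℂ) * fracDeriv s f (B * x) := by
  have hBne : (B : ℂ) ≠ 0 := Complex.ofReal_ne_zero.mpr hB.ne'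
  set G : ℝ → ℂ := fun η => (((B ^ s * B⁻¹ : ℝ)) : ℂ) * ((((2 * π * |η|) ^ s : ℝ) : ℂ) * fourierT f η
      * Complex.exp (2 * (π : ℂ) * Complex.I * ((B * x : ℝ) : ℂ) * (η : ℂ))) with hG
  have hpt : ∀ ξ : ℝ, (((2 * π * |ξ|) ^ s : ℝ) : ℂ) * fourierT (fun y => f (B * y)) ξ
      * Complex.exp (2 * (π : ℂ) * Complex.I * (x : ℂ) * (ξ : ℂ)) = G (ξ / B) := by
    intro ξ
    rw [fourierT_comp_mul_left f hB]
    have hpow : (B ^ s) * (2 * π * |ξ / B|) ^ s = (2 * π * |ξ|) ^ s := by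
      rw [abs_div, abs_of_pos hB, ← Real.mul_rpow hB.le (by positivity)]
      congr 1
      first
      | (field_simp; ring)
      | field_simp
      | rfl
    have hexp : Complex.exp (2 * (π : ℂ) * Complex.I * ((B * x : ℝ) : ℂ) * (((ξ / B : ℝ)) : ℂ))
        = Complex.exp (2 * (π : ℂ) * Complex.I * (x : ℂ) * (ξ : ℂ)) := by
      congr 1
      push_cast
      first
      | (field_simp; ring)
      | field_simp
    rw [hG]
    simp only
    rw [hexp, ← hpow]
    push_cast
    ring
  have step1 : fracDeriv s (fun y => f (B * y)) x = ∫ ξ : ℝ, G (ξ / B) := by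
    unfold fracDeriv
    exact integral_congr_ae (Filter.Eventually.of_forall hpt)
  rw [step1, MeasureTheory.Measure.integral_comp_div G B, abs_of_pos hB, Complex.real_smul]
  have hGint : (∫ η : ℝ, G η) = (((B ^ s * B⁻¹ : ℝ)) : ℂ) * fracDeriv s f (B * x) := by
    rw [hG]
    rw [integral_const_mul]
    rfl
  rw [hGint]
  rw [← mul_assoc]
  congr 1
  rw [← Complex.ofReal_mul]
  congr 1
  field_simp

/-- Real-to-complex integral coercion. -/
lemma integral_coe_ofReal (f : ℝ → ℝ) :
    (∫ x : ℝ, ((f x : ℝ) : ℂ)) = ((∫ x : ℝ, f x : ℝ) : ℂ) := integral_ofReal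

/-- The momentum computation of Section 6.1:
`⟨(I + |∂ₓ|^s) U_c, U_c⟩ = (c−1)^{2/p−1/s} c^{1/s−1} ⟨Q,Q⟩ + (c−1)^{1+2/p−1/s} c^{1/s−1} ⟨Q^{p+1},Q⟩`
for the fractional BBM traveling wave `U_c(x) = (c−1)^{1/p} Q(((c−1)/c)^{1/s} x)`. -/
theorem fractional_bbm_momentum
    (s : ℝ) (hs : 0 < s) (p : ℕ) (hp : 1 ≤ p) (Q : ℝ → ℝ)
    (hQ1 : Integrable Q) (hQ2 : MemLp Q 2 (volume : Measure ℝ))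
    (hQhat : Integrable (fun ξ : ℝ =>
      (2 * π * |ξ|) ^ s * ‖fourierT (fun x : ℝ => (Q x : ℂ)) ξ‖))
    (hQp2 : Integrable (fun x : ℝ => Q x ^ (p + 2)))
    (hgs : ∀ x : ℝ,
      fracDeriv s (fun y : ℝ => (Q y : ℂ)) x + (Q x : ℂ) - (Q x : ℂ) ^ (p + 1) = 0)
    (c : ℝ) (hc : 1 < c) (U : ℝ → ℝ)
    (hU : U = fun x : ℝ => (c - 1) ^ ((1 : ℝ) / p) * Q (((c - 1) / c) ^ ((1 : ℝ) / s) * x))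
    (hU2 : Integrable (fun x : ℝ => U x ^ 2))
    (hUp2 : Integrable (fun x : ℝ => U x ^ (p + 2)))
    (hUfrac : Integrable (fun x : ℝ => fracDeriv s (fun y : ℝ => (U y : ℂ)) x * (U x : ℂ))) :
    (∫ x : ℝ, ((U x : ℂ) + fracDeriv s (fun y : ℝ => (U y : ℂ)) x) * (U x : ℂ))
      = (((c - 1) ^ (2 / (p : ℝ) - 1 / s) * c ^ (1 / s - 1) * ∫ x : ℝ, Q x ^ 2 : ℝ) : ℂ)
        + (((c - 1) ^ (1 + 2 / (p : ℝ) - 1 / s) * c ^ (1 / s - 1)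
            * ∫ x : ℝ, Q x ^ (p + 2) : ℝ) : ℂ) := by
  have hc1 : (0 : ℝ) < c - 1 := by linarith
  have hc0 : (0 : ℝ) < c := by linarith
  set A : ℝ := (c - 1) ^ ((1 : ℝ) / p) with hA
  set B : ℝ := ((c - 1) / c) ^ ((1 : ℝ) / s) with hB
  have hBpos : 0 < B := Real.rpow_pos_of_pos (div_pos hc1 hc0) _
  have hApos : 0 < A := Real.rpow_pos_of_pos hc1 _
  have hBs : B ^ s = (c - 1) / c := by
    rw [hB, ← Real.rpow_mul (le_of_lt (div_pos hc1 hc0)), one_div, inv_mul_cancel₀ hs.ne',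
      Real.rpow_one]
  -- pointwise formula for fracDeriv of U
  have hfracU : ∀ x : ℝ, fracDeriv s (fun y : ℝ => (U y : ℂ)) x
      = (A : ℂ) * (((c - 1) / c : ℝ) : ℂ) * ((Q (B * x) : ℂ) ^ (p + 1) - (Q (B * x) : ℂ)) := by
    intro x
    have hUy : (fun y : ℝ => (U y : ℂ)) = fun y : ℝ => (A : ℂ) * ((Q (B * y) : ℝ) : ℂ) := by
      funext y
      rw [hU]
      push_cast
      rfl
    have h2 := fracDeriv_comp_mul_left s (fun z : ℝ => (Q z : ℂ)) hBpos x
    rw [hUy, fracDeriv_const_mul, h2, hBs]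
    have := hgs (B * x)
    have hQeq : fracDeriv s (fun y : ℝ => (Q y : ℂ)) (B * x)
        = (Q (B * x) : ℂ) ^ (p + 1) - (Q (B * x) : ℂ) := by linear_combination this
    rw [hQeq]
    ring
  -- integrability facts
  have hQB2 : Integrable (fun x : ℝ => Q (B * x) ^ 2) :=
    (hQ2.integrable_sq).comp_mul_left' hBpos.ne'
  have hQBp2 : Integrable (fun x : ℝ => Q (B * x) ^ (p + 2)) :=
    hQp2.comp_mul_left' hBpos.ne'
  -- scaling of real integrals
  have hI2 : (∫ x : ℝ, Q (B * x) ^ 2) = B⁻¹ * ∫ x : ℝ, Q x ^ 2 := by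
    have := MeasureTheory.Measure.integral_comp_mul_left (fun y : ℝ => Q y ^ 2) B
    rw [this, abs_of_pos (inv_pos.mpr hBpos), smul_eq_mul]
  have hIp2 : (∫ x : ℝ, Q (B * x) ^ (p + 2)) = B⁻¹ * ∫ x : ℝ, Q x ^ (p + 2) := by
    have := MeasureTheory.Measure.integral_comp_mul_left (fun y : ℝ => Q y ^ (p + 2)) B
    rw [this, abs_of_pos (inv_pos.mpr hBpos), smul_eq_mul]
  -- split the integral
  have hUsq : Integrable (fun x : ℝ => ((U x : ℂ)) * (U x : ℂ)) := by
    have : (fun x : ℝ => ((U x : ℂ)) * (U x : ℂ)) = fun x : ℝ => ((U x ^ 2 : ℝ) : ℂ) := by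
      funext x; push_cast; ring
    rw [this]
    exact hU2.ofReal
  have hsplit : (∫ x : ℝ, ((U x : ℂ) + fracDeriv s (fun y : ℝ => (U y : ℂ)) x) * (U x : ℂ))
      = (∫ x : ℝ, ((U x : ℂ)) * (U x : ℂ))
        + ∫ x : ℝ, fracDeriv s (fun y : ℝ => (U y : ℂ)) x * (U x : ℂ) := by
    rw [← integral_add hUsq hUfrac]
    congr 1; ext x; ring
  -- compute the first integral
  have hUval : ∀ x : ℝ, U x = A * Q (B * x) := by
    intro x; rw [hU]
  have hfirst : (∫ x : ℝ, ((U x : ℂ)) * (U x : ℂ)) = ((A ^ 2 * B⁻¹ * ∫ x : ℝ, Q x ^ 2 : ℝ) : ℂ) := by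
    have h1 : (fun x : ℝ => ((U x : ℂ)) * (U x : ℂ)) = fun x : ℝ => ((A ^ 2 * Q (B * x) ^ 2 : ℝ) : ℂ) := by
      funext x; rw [hUval x]; push_cast; ring
    rw [h1, integral_coe_ofReal]
    norm_cast
    rw [integral_const_mul, hI2]
    ring
  -- compute the second integral
  have hsecond : (∫ x : ℝ, fracDeriv s (fun y : ℝ => (U y : ℂ)) x * (U x : ℂ))
      = ((A ^ 2 * ((c - 1) / c) * B⁻¹ * ((∫ x : ℝ, Q x ^ (p + 2)) - ∫ x : ℝ, Q x ^ 2) : ℝ) : ℂ) := by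
    have h1 : (fun x : ℝ => fracDeriv s (fun y : ℝ => (U y : ℂ)) x * (U x : ℂ))
        = fun x : ℝ => ((A ^ 2 * ((c - 1) / c) * (Q (B * x) ^ (p + 2) - Q (B * x) ^ 2) : ℝ) : ℂ) := by
      funext x
      rw [hfracU x, hUval x]
      push_cast
      ring
    rw [h1, integral_coe_ofReal]
    norm_cast
    rw [integral_const_mul, integral_sub hQBp2 hQB2, hI2, hIp2]
    ring
  rw [hsplit, hfirst, hsecond]
  rw [← Complex.ofReal_add]
  norm_cast
  -- now pure real arithmetic with rpow
  have hA2 : A ^ 2 = (c - 1) ^ (2 / (p : ℝ)) := by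
    rw [hA, ← Real.rpow_natCast ((c - 1) ^ ((1 : ℝ) / p)) 2, ← Real.rpow_mul hc1.le]
    norm_num
    ring_nf
  have hBinv : B⁻¹ = (c - 1) ^ (-(1 / s)) * c ^ (1 / s) := by
    have hBalt : B = (c - 1) ^ ((1 : ℝ) / s) * (c ^ ((1 : ℝ) / s))⁻¹ := by
      rw [hB, Real.div_rpow hc1.le hc0.le, div_eq_mul_inv]
    rw [hBalt, mul_inv, inv_inv, ← Real.rpow_neg hc1.le]
  rw [hA2, hBinv]
  have e1 : (c - 1) ^ (2 / (p : ℝ)) * ((c - 1) ^ (-(1 / s)) * c ^ (1 / s))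
      = (c - 1) ^ (2 / (p : ℝ) - 1 / s) * c ^ (1 / s) := by
    rw [← mul_assoc, ← Real.rpow_add hc1]
    ring_nf
  have hcs : c ^ (1 / s - 1) = c ^ (1 / s) * c⁻¹ := by
    rw [Real.rpow_sub hc0, Real.rpow_one, div_eq_mul_inv]
  have e2 : (c - 1) ^ (1 + 2 / (p : ℝ) - 1 / s) = (c - 1) * (c - 1) ^ (2 / (p : ℝ) - 1 / s) := by
    rw [show (1 + 2 / (p : ℝ) - 1 / s) = 1 + (2 / (p : ℝ) - 1 / s) by ring,
      Real.rpow_add hc1, Real.rpow_one]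
  rw [hcs, e2]
  have e3 : (c - 1) ^ (2 / (p : ℝ)) * ((c - 1) ^ (-(1 / s)) * c ^ (1 / s))
      = (c - 1) ^ (2 / (p : ℝ) - 1 / s) * c ^ (1 / s) := e1
  set R2 := ∫ x : ℝ, Q x ^ 2
  set Rp := ∫ x : ℝ, Q x ^ (p + 2)
  have lhs_eq : (c - 1) ^ (2 / (p : ℝ)) * ((c - 1) ^ (-(1 / s)) * c ^ (1 / s)) * R2
      + (c - 1) ^ (2 / (p : ℝ)) * ((c - 1) / c) * ((c - 1) ^ (-(1 / s)) * c ^ (1 / s)) * (Rp - R2)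
      = (c - 1) ^ (2 / (p : ℝ) - 1 / s) * c ^ (1 / s) * R2
        + (c - 1) ^ (2 / (p : ℝ) - 1 / s) * c ^ (1 / s) * ((c - 1) / c) * (Rp - R2) := by
    rw [← e3]; ring
  rw [lhs_eq]
  field_simp
  ring
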